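/- For every n ≥ 1, every finite bridge-addable set 𝒢ₙ of graphs on n vertices, and every i ≥ 1, one has i·|𝒢ₙ^{(i+1)}| ≤ |𝒢ₙ^{(i)}|. -/

import Mathlib

open Filter

/-- The graph obtained from `G` by adding the edge `uv`. -/
def addEdge {n : ℕ} (G : SimpleGraph (Fin n)) (u v : Fin n) : SimpleGraph (Fin n) :=
  G ⊔ SimpleGraph.fromEdgeSet {s(u, v)}

/-- A set of graphs on `n` vertices is bridge-addable if it is closed under adding an
edge between two vertices lying in distinct connected components. -/
def BridgeAddable {n : ℕ} (𝒢 : Set (SimpleGraph (Fin n))) : Prop :=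
  ∀ G ∈ 𝒢, ∀ u v : Fin n, ¬G.Reachable u v → addEdge G u v ∈ 𝒢

/-- The number of connected components of a graph. -/
noncomputable def numComponents {n : ℕ} (G : SimpleGraph (Fin n)) : ℕ :=
  Nat.card G.ConnectedComponent

/-- A bridge-addable class of graphs: for each `n ≥ 1`, a nonempty finite
bridge-addable set of graphs on `n` vertices. -/
def IsBridgeAddableClass (𝒢 : ∀ n : ℕ, Set (SimpleGraph (Fin n))) : Prop :=
  ∀ n : ℕ, 1 ≤ n → (𝒢 n).Finite ∧ (𝒢 n).Nonempty ∧ BridgeAddable (𝒢 n)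

/-- The probability that a uniformly random element of `𝒢 n` is connected. -/
noncomputable def connProb (𝒢 : ∀ n : ℕ, Set (SimpleGraph (Fin n))) (n : ℕ) : ℝ :=
  ({G ∈ 𝒢 n | G.Connected}.ncard : ℝ) / ((𝒢 n).ncard : ℝ)

/-- A class is `ζ`-tight if eventually the probability of being connected is at
most `(1+ζ)e^{-1/2}`. -/
def ZetaTight (ζ : ℝ) (𝒢 : ∀ n : ℕ, Set (SimpleGraph (Fin n))) : Prop :=
  ∃ n₀ : ℕ, ∀ n : ℕ, n₀ ≤ n → connProb 𝒢 n ≤ (1 + ζ) * Real.exp (-(1/2))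

/-- A class is tight if the probability of being connected tends to `e^{-1/2}`. -/
def Tight (𝒢 : ∀ n : ℕ, Set (SimpleGraph (Fin n))) : Prop :=
  Tendsto (connProb 𝒢) atTop (nhds (Real.exp (-(1/2))))

/-- The largest label of a vertex in a connected component. -/
noncomputable def maxLabel {n : ℕ} {G : SimpleGraph (Fin n)} (C : G.ConnectedComponent) : ℕ :=
  sSup ((fun v : Fin n => (v : ℕ)) '' C.supp)

/-- `C` is the largest component of `G`: any other component is strictly smaller, or of the
same order but with a smaller maximal vertex label. -/
def IsLargestComp {n : ℕ} (G : SimpleGraph (Fin n)) (C : G.ConnectedComponent) : Prop :=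
  ∀ D : G.ConnectedComponent, D ≠ C →
    D.supp.ncard < C.supp.ncard ∨ (D.supp.ncard = C.supp.ncard ∧ maxLabel D < maxLabel C)

/-- The set of vertices of `G` lying outside the largest component. -/
def smallSupp {n : ℕ} (G : SimpleGraph (Fin n)) : Set (Fin n) :=
  {v | ¬IsLargestComp G (G.connectedComponentMk v)}

/-- `Small(G)`: the union of all the components of `G` other than the largest one. -/
def smallGraph {n : ℕ} (G : SimpleGraph (Fin n)) : SimpleGraph (smallSupp G) :=
  G.induce (smallSupp G)

/-- `p_∞(f) = e^{-1/2} e^{-|f|} / Aut(f)`. -/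
noncomputable def pInf (V : Type) (f : SimpleGraph V) : ℝ :=
  Real.exp (-(1/2)) * Real.exp (-(Nat.card V : ℝ)) / (Nat.card (f ≃g f) : ℝ)

/-- The vertex set of the connected component of `v` after deleting the edge `vu`. -/
def pendantAt {n : ℕ} (G : SimpleGraph (Fin n)) (v u : Fin n) : Set (Fin n) :=
  ((G.deleteEdges {s(v, u)}).connectedComponentMk v).supp

/-- The vertex set of the connected component of `u` after deleting the edge `vu`. -/
def bulkAt {n : ℕ} (G : SimpleGraph (Fin n)) (v u : Fin n) : Set (Fin n) :=
  ((G.deleteEdges {s(v, u)}).connectedComponentMk u).supp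

lemma mem_pendantAt {n : ℕ} (G : SimpleGraph (Fin n)) (v u : Fin n) : v ∈ pendantAt G v u :=
  rfl

/-- `v` carries a pendant copy of the rooted tree `(T, root)` in `G`: some cut-edge is
incident to `v`, and removing the cut-edge at `v` that separates `v` from the largest
possible component leaves `v` in a component which, rooted at `v`, is isomorphic
to `(T, root)`. -/
def IsPendantCopy {n : ℕ} (G : SimpleGraph (Fin n)) {W : Type} (T : SimpleGraph W)
    (root : W) (v : Fin n) : Prop :=
  ∃ u : Fin n, G.IsBridge s(v, u) ∧
    (∀ u' : Fin n, G.IsBridge s(v, u') →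
      (bulkAt G v u').ncard ≤ (bulkAt G v u).ncard) ∧
    ∃ φ : (G.deleteEdges {s(v, u)}).induce (pendantAt G v u) ≃g T,
      φ ⟨v, mem_pendantAt G v u⟩ = root

/-- `α^G(T)`: the number of pendant copies of the rooted tree `(T, root)` in `G`. -/
noncomputable def alphaCount {n : ℕ} (G : SimpleGraph (Fin n)) {W : Type}
    (T : SimpleGraph W) (root : W) : ℕ :=
  Nat.card {v : Fin n | IsPendantCopy G T root v}

/-- `a_∞(T) = e^{-|T|} / Aut_r(T)`. -/
noncomputable def aInf (W : Type) (T : SimpleGraph W) (root : W) : ℝ :=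
  Real.exp (-(Nat.card W : ℝ)) / (Nat.card {φ : T ≃g T // φ root = root} : ℝ)

open SimpleGraph Finset
open scoped Classical

variable {n : ℕ}

lemma addEdge_adj_iff {G : SimpleGraph (Fin n)} {u v a b : Fin n} :
    (addEdge G u v).Adj a b ↔ G.Adj a b ∨ ((a = u ∧ b = v ∨ a = v ∧ b = u) ∧ a ≠ b) := by
  simp [addEdge, sup_adj, fromEdgeSet_adj, Sym2.eq_iff]

lemma addEdge_reach {G : SimpleGraph (Fin n)} {u v : Fin n} (h : ¬G.Reachable u v)
    {a b : Fin n} (hr : (addEdge G u v).Reachable a b) :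
    G.Reachable a b ∨ (G.Reachable a u ∧ G.Reachable v b) ∨
      (G.Reachable a v ∧ G.Reachable u b) := by
  obtain ⟨p⟩ := hr
  induction p with
  | nil => exact Or.inl (Reachable.refl _)
  | @cons a c b hac p ih =>
    have hac' : G.Adj a c ∨ (a = u ∧ c = v) ∨ (a = v ∧ c = u) := by
      rcases addEdge_adj_iff.mp hac with h1 | ⟨h1 | h1, -⟩
      · exact Or.inl h1
      · exact Or.inr (Or.inl h1)
      · exact Or.inr (Or.inr h1)
    rcases ih with h1 | ⟨h1, h2⟩ | ⟨h1, h2⟩ <;>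
      rcases hac' with h3 | ⟨rfl, rfl⟩ | ⟨rfl, rfl⟩
    · exact Or.inl (h3.reachable.trans h1)
    · exact Or.inr (Or.inl ⟨Reachable.refl _, h1⟩)
    · exact Or.inr (Or.inr ⟨Reachable.refl _, h1⟩)
    · exact Or.inr (Or.inl ⟨h3.reachable.trans h1, h2⟩)
    · exact absurd h1.symm h
    · exact Or.inl h2
    · exact Or.inr (Or.inr ⟨h3.reachable.trans h1, h2⟩)
    · exact Or.inl h2
    · exact absurd h1 h

lemma addEdge_adj_self {G : SimpleGraph (Fin n)} {u v : Fin n} (h : u ≠ v) :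
    (addEdge G u v).Adj u v :=
  addEdge_adj_iff.mpr (Or.inr ⟨Or.inl ⟨rfl, rfl⟩, h⟩)

lemma le_addEdge {G : SimpleGraph (Fin n)} {u v : Fin n} : G ≤ addEdge G u v := le_sup_left

lemma nc_addEdge {G : SimpleGraph (Fin n)} {u v : Fin n} (h : ¬G.Reachable u v) :
    numComponents (addEdge G u v) + 1 = numComponents G := by
  classical
  have hne : u ≠ v := fun e => h (e ▸ Reachable.refl u)
  have hcuv : G.connectedComponentMk u ≠ G.connectedComponentMk v :=
    fun e => h (ConnectedComponent.exact e)
  have hG'uv : (addEdge G u v).Reachable u v := (addEdge_adj_self hne).reachable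
  let g : Fin n → {C : G.ConnectedComponent // C ≠ G.connectedComponentMk v} := fun w =>
    if hw : G.Reachable w v then ⟨G.connectedComponentMk u, hcuv⟩
    else ⟨G.connectedComponentMk w, fun e => hw (ConnectedComponent.exact e)⟩
  have hg : ∀ a b : Fin n, (addEdge G u v).Reachable a b → g a = g b := by
    intro a b hab
    rcases addEdge_reach h hab with h1 | ⟨h1, h2⟩ | ⟨h1, h2⟩
    · by_cases hav : G.Reachable a v
      · have hbv : G.Reachable b v := h1.symm.trans hav
        simp [g, hav, hbv]
      · have hbv : ¬G.Reachable b v := fun hbv => hav (h1.trans hbv)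
        simp only [g, dif_neg hav, dif_neg hbv]
        exact Subtype.ext (ConnectedComponent.sound h1)
    · have hav : ¬G.Reachable a v := fun hav => h (h1.symm.trans hav)
      have hbv : G.Reachable b v := h2.symm
      simp only [g, dif_neg hav, dif_pos hbv]
      exact Subtype.ext (ConnectedComponent.sound h1)
    · have hav : G.Reachable a v := h1
      have hbv : ¬G.Reachable b v := fun hbv => h (h2.trans hbv)
      simp only [g, dif_pos hav, dif_neg hbv]
      exact Subtype.ext (ConnectedComponent.sound h2)
  have hle : G ≤ addEdge G u v := le_sup_left
  let e : (addEdge G u v).ConnectedComponent ≃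
      {C : G.ConnectedComponent // C ≠ G.connectedComponentMk v} :=
    { toFun := Quot.lift g hg
      invFun := fun C => C.1.map (Hom.ofLE hle)
      left_inv := by
        refine ConnectedComponent.ind fun w => ?_
        show ((g w).1.map (Hom.ofLE hle)) = _
        by_cases hw : G.Reachable w v
        · simp only [g, dif_pos hw]
          exact ConnectedComponent.sound (hG'uv.trans (hw.symm.mono hle))
        · simp only [g, dif_neg hw]
          rfl
      right_inv := by
        rintro ⟨C, hC⟩
        revert hC
        refine C.ind fun w => ?_
        intro hC
        have hw : ¬G.Reachable w v := fun hw => hC (ConnectedComponent.sound hw)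
        show Quot.lift g hg ((G.connectedComponentMk w).map (Hom.ofLE hle)) = _
        have hmap : (G.connectedComponentMk w).map (Hom.ofLE hle)
            = (addEdge G u v).connectedComponentMk w := rfl
        rw [hmap]
        show g w = _
        simp only [g, dif_neg hw] }
  have hcard := Nat.card_congr e
  haveI : Finite G.ConnectedComponent :=
    Finite.of_surjective G.connectedComponentMk (fun C => C.exists_rep)
  rw [numComponents, numComponents, hcard]
  letI : Fintype G.ConnectedComponent := Fintype.ofFinite _
  rw [Nat.card_eq_fintype_card, Nat.card_eq_fintype_card]
  have h1 : Fintype.card {C : G.ConnectedComponent // C ≠ G.connectedComponentMk v}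
      = Fintype.card G.ConnectedComponent
        - Fintype.card {C : G.ConnectedComponent // C = G.connectedComponentMk v} :=
    Fintype.card_subtype_compl _
  have h2 : Fintype.card {C : G.ConnectedComponent // C = G.connectedComponentMk v} = 1 :=
    Fintype.card_subtype_eq _
  have h3 : 0 < Fintype.card G.ConnectedComponent :=
    Fintype.card_pos_iff.mpr ⟨G.connectedComponentMk v⟩
  omega

lemma nc_le (G : SimpleGraph (Fin n)) : numComponents G ≤ n := by
  have h := Nat.card_le_card_of_surjective G.connectedComponentMk (fun C => C.exists_rep)
  simpa [numComponents] using h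

lemma deleteEdges_addEdge {G : SimpleGraph (Fin n)} {u v : Fin n} (h : ¬G.Adj u v) :
    (addEdge G u v).deleteEdges {s(u, v)} = G := by
  ext a b
  simp only [SimpleGraph.deleteEdges_adj, addEdge_adj_iff, Set.mem_singleton_iff]
  constructor
  · rintro ⟨h1 | ⟨h1 | h1, -⟩, h3⟩
    · exact h1
    · exact absurd (by rw [h1.1, h1.2]) h3
    · exact absurd (by rw [h1.1, h1.2, Sym2.eq_swap]) h3
  · intro hab
    refine ⟨Or.inl hab, fun he => h ?_⟩
    rcases Sym2.eq_iff.mp he with ⟨rfl, rfl⟩ | ⟨rfl, rfl⟩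
    · exact hab
    · exact hab.symm

lemma addEdge_deleteEdges {G : SimpleGraph (Fin n)} {u v : Fin n} (h : G.Adj u v) :
    addEdge (G.deleteEdges {s(u, v)}) u v = G := by
  ext a b
  simp only [addEdge, sup_adj, SimpleGraph.deleteEdges_adj, fromEdgeSet_adj,
    Set.mem_singleton_iff]
  constructor
  · rintro (⟨h1, -⟩ | ⟨he, hne⟩)
    · exact h1
    · rcases Sym2.eq_iff.mp he with ⟨rfl, rfl⟩ | ⟨rfl, rfl⟩
      · exact h
      · exact h.symm
  · intro hab
    by_cases he : s(a, b) = s(u, v)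
    · exact Or.inr ⟨he, hab.ne⟩
    · exact Or.inl ⟨hab, he⟩

/-- A bridge that is an edge (the installed `IsBridge` no longer requires adjacency). -/
def IsBr (G : SimpleGraph (Fin n)) (e : Sym2 (Fin n)) : Prop := e ∈ G.edgeSet ∧ G.IsBridge e

lemma isBr_iff {G : SimpleGraph (Fin n)} {u v : Fin n} :
    IsBr G s(u, v) ↔ G.Adj u v ∧ ¬(G.deleteEdges {s(u, v)}).Reachable u v := by
  rw [IsBr, mem_edgeSet, isBridge_iff]

lemma IsBridge.deleteEdges_of_ne {G : SimpleGraph (Fin n)} {f e : Sym2 (Fin n)}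
    (hf : IsBr G f) (hne : f ≠ e) : IsBr (G.deleteEdges {e}) f := by
  induction f using Sym2.ind with
  | _ a b =>
    rw [isBr_iff] at hf ⊢
    obtain ⟨hadj, hr⟩ := hf
    refine ⟨by simp [SimpleGraph.deleteEdges_adj, hadj, hne], fun hre => hr (hre.mono ?_)⟩
    exact sdiff_le_sdiff_right (SimpleGraph.deleteEdges_le _)

lemma bridge_bound : ∀ (k : ℕ) (G : SimpleGraph (Fin n)),
    (Finset.univ.filter (fun e : Sym2 (Fin n) => e ∈ G.edgeSet)).card ≤ k →
    (Finset.univ.filter (fun e : Sym2 (Fin n) => IsBr G e)).card + numComponents G ≤ n := by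
  classical
  intro k
  induction k with
  | zero =>
    intro G hG
    have hsub : (Finset.univ.filter (fun e : Sym2 (Fin n) => IsBr G e)) ⊆
        Finset.univ.filter (fun e : Sym2 (Fin n) => e ∈ G.edgeSet) :=
      Finset.monotone_filter_right _ (fun e _ (he : IsBr G e) => he.1)
    have := Finset.card_le_card hsub
    have := nc_le G
    omega
  | succ k ih =>
    intro G hG
    by_cases hb : (Finset.univ.filter (fun e : Sym2 (Fin n) => IsBr G e)).Nonempty
    · obtain ⟨e, he⟩ := hb
      have hbr0 : IsBr G e := (Finset.mem_filter.mp he).2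
      obtain ⟨u, v, hbr⟩ : ∃ u v : Fin n, IsBr G s(u, v) := by
        revert hbr0; exact Sym2.ind (fun u v h => ⟨u, v, h⟩) e
      have hbr' := isBr_iff.mp hbr
      have hadj : G.Adj u v := hbr'.1
      have hnr : ¬(G.deleteEdges {s(u, v)}).Reachable u v := hbr'.2
      have heq : addEdge (G.deleteEdges {s(u, v)}) u v = G := addEdge_deleteEdges hadj
      have hnc : numComponents G + 1 = numComponents (G.deleteEdges {s(u, v)}) := by
        have := nc_addEdge hnr
        rwa [heq] at this
      have hedges : (Finset.univ.filter
            (fun e : Sym2 (Fin n) => e ∈ (G.deleteEdges {s(u, v)}).edgeSet)) =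
          (Finset.univ.filter (fun e : Sym2 (Fin n) => e ∈ G.edgeSet)).erase s(u, v) := by
        ext f
        simp [SimpleGraph.edgeSet_deleteEdges, and_comm]
      have hmem : s(u, v) ∈ Finset.univ.filter (fun e : Sym2 (Fin n) => e ∈ G.edgeSet) := by
        simp [hadj]
      have hcard2 : (Finset.univ.filter
          (fun e : Sym2 (Fin n) => e ∈ (G.deleteEdges {s(u, v)}).edgeSet)).card ≤ k := by
        rw [hedges, Finset.card_erase_of_mem hmem]
        have : 0 < (Finset.univ.filter (fun e : Sym2 (Fin n) => e ∈ G.edgeSet)).card :=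
          Finset.card_pos.mpr ⟨_, hmem⟩
        omega
      have IH := ih (G.deleteEdges {s(u, v)}) (by convert hcard2)
      have hsub : (Finset.univ.filter (fun e : Sym2 (Fin n) => IsBr G e)) ⊆
          insert s(u, v)
            (Finset.univ.filter (fun e : Sym2 (Fin n) => IsBr (G.deleteEdges {s(u, v)}) e)) := by
        intro f hf
        rcases eq_or_ne f s(u, v) with rfl | hfe
        · exact Finset.mem_insert_self _ _
        · refine Finset.mem_insert_of_mem (Finset.mem_filter.mpr ⟨Finset.mem_univ _, ?_⟩)
          exact IsBridge.deleteEdges_of_ne (Finset.mem_filter.mp hf).2 hfe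
      have hcardb := Finset.card_le_card hsub
      have hcardb' := Finset.card_insert_le s(u, v)
        (Finset.univ.filter (fun e : Sym2 (Fin n) => IsBr (G.deleteEdges {s(u, v)}) e))
      omega
    · rw [Finset.not_nonempty_iff_eq_empty] at hb
      rw [hb]
      have := nc_le G
      simpa using this

lemma ordered_bridge_bound (G : SimpleGraph (Fin n)) :
    (Finset.univ.filter fun p : Fin n × Fin n => IsBr G s(p.1, p.2)).card
      ≤ 2 * (n - numComponents G) := by
  classical
  set S := Finset.univ.filter fun p : Fin n × Fin n => IsBr G s(p.1, p.2) with hS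
  have h1 : S.card ≤ 2 * (S.image fun p => s(p.1, p.2)).card := by
    refine Finset.card_le_mul_card_image S 2 ?_
    intro a _
    induction a using Sym2.ind with
    | _ x y =>
      have hsub : S.filter (fun p => s(p.1, p.2) = s(x, y)) ⊆ {(x, y), (y, x)} := by
        intro p hp
        have hpe := (Finset.mem_filter.mp hp).2
        rcases Sym2.eq_iff.mp hpe with ⟨h1, h2⟩ | ⟨h1, h2⟩ <;>
          simp [Finset.mem_insert, Prod.ext_iff, h1, h2]
      refine (Finset.card_le_card hsub).trans ?_
      refine (Finset.card_insert_le _ _).trans ?_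
      simp
  have h2 : (S.image fun p => s(p.1, p.2)) ⊆
      Finset.univ.filter (fun e : Sym2 (Fin n) => IsBr G e) := by
    intro e he
    obtain ⟨p, hp, rfl⟩ := Finset.mem_image.mp he
    simp only [Finset.mem_filter, Finset.mem_univ, true_and]
    exact (Finset.mem_filter.mp hp).2
  have h3 := bridge_bound
    (Finset.univ.filter (fun e : Sym2 (Fin n) => e ∈ G.edgeSet)).card G le_rfl
  have h4 := Finset.card_le_card h2
  omega

lemma cross_lower {G : SimpleGraph (Fin n)} {i : ℕ} (hi : 1 ≤ i)
    (hcc : numComponents G = i + 1) :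
    2 * i * (n - i) ≤ (Finset.univ.filter fun p : Fin n × Fin n => ¬G.Reachable p.1 p.2).card := by
  classical
  haveI : Finite G.ConnectedComponent :=
    Finite.of_surjective G.connectedComponentMk (fun C => C.exists_rep)
  letI : Fintype G.ConnectedComponent := Fintype.ofFinite _
  set s : G.ConnectedComponent → ℕ :=
    fun C => (Finset.univ.filter fun w => G.connectedComponentMk w = C).card with hs
  have hcard : Fintype.card G.ConnectedComponent = i + 1 := by
    rw [← Nat.card_eq_fintype_card]; exact hcc
  have hpos : ∀ C, 1 ≤ s C := by
    intro C
    refine C.ind fun w => ?_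
    refine Finset.card_pos.mpr ⟨w, ?_⟩
    simp only [hs, Finset.mem_filter, Finset.mem_univ, true_and]
  have hsum : ∑ C, s C = n := by
    calc ∑ C, s C = (Finset.univ : Finset (Fin n)).card :=
          (Finset.card_eq_sum_card_fiberwise fun x _ => Finset.mem_univ _).symm
      _ = n := by simp
  have hR : (Finset.univ.filter fun p : Fin n × Fin n => G.Reachable p.1 p.2).card
      = ∑ C, s C * s C := by
    rw [Finset.card_eq_sum_card_fiberwise
      (f := fun p : Fin n × Fin n => G.connectedComponentMk p.1)
      (t := Finset.univ) (fun x _ => Finset.mem_univ _)]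
    refine Finset.sum_congr rfl fun C _ => ?_
    have hprod : (Finset.univ.filter fun p : Fin n × Fin n => G.Reachable p.1 p.2).filter
          (fun p => G.connectedComponentMk p.1 = C)
        = (Finset.univ.filter fun w => G.connectedComponentMk w = C) ×ˢ
          (Finset.univ.filter fun w => G.connectedComponentMk w = C) := by
      ext p
      simp only [Finset.mem_filter, Finset.mem_univ, true_and, Finset.mem_product]
      constructor
      · rintro ⟨hr, hc⟩
        exact ⟨hc, ((ConnectedComponent.sound hr.symm).trans hc)⟩
      · rintro ⟨h1, h2⟩
        exact ⟨ConnectedComponent.exact (h1.trans h2.symm), h1⟩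
    rw [hprod, Finset.card_product]
  have hsplit := Finset.card_filter_add_card_filter_not
    (s := (Finset.univ : Finset (Fin n × Fin n))) (p := fun p => G.Reachable p.1 p.2)
  have huniv : (Finset.univ : Finset (Fin n × Fin n)).card = n * n := by simp
  suffices hnum : ∑ C, s C * s C + 2 * i * (n - i) ≤ n * n by omega
  set b : G.ConnectedComponent → ℕ := fun C => s C - 1 with hb
  have hsb : ∀ C, s C = b C + 1 := fun C => by
    have := hpos C; simp only [hb]; omega
  obtain ⟨m, hm⟩ : ∃ m, ∑ C, b C = m := ⟨_, rfl⟩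
  have hsumb : m + (i + 1) = n := by
    have h1 : ∑ C, (b C + 1) = ∑ C, s C := Finset.sum_congr rfl fun C _ => (hsb C).symm
    rw [Finset.sum_add_distrib, hm, Finset.sum_const, Finset.card_univ, hcard, hsum] at h1
    simpa using h1
  have hbound : ∀ C, b C ≤ m := fun C =>
    hm ▸ Finset.single_le_sum (fun _ _ => Nat.zero_le _) (Finset.mem_univ C)
  have hsq : ∑ C, b C * b C ≤ m * m := by
    calc ∑ C, b C * b C ≤ ∑ C, b C * m :=
          Finset.sum_le_sum fun C _ => Nat.mul_le_mul_left _ (hbound C)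
      _ = m * m := by rw [← Finset.sum_mul, hm]
  have hss : ∑ C, s C * s C = ∑ C, b C * b C + 2 * m + (i + 1) := by
    calc ∑ C, s C * s C = ∑ C, (b C * b C + 2 * b C + 1) :=
          Finset.sum_congr rfl fun C _ => by rw [hsb C]; ring
      _ = ∑ C, b C * b C + 2 * m + (i + 1) := by
          rw [Finset.sum_add_distrib, Finset.sum_add_distrib, Finset.sum_const,
            Finset.card_univ, hcard, ← Finset.mul_sum, hm]
          simp
  have hni : n - i = m + 1 := by omega
  have hn' : n = m + i + 1 := by omega
  rw [hss, hni]
  nlinarith [hsq, hi, hn']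


/-- For every `n ≥ 1`, every finite bridge-addable set `𝒢` of graphs on
`n` vertices, and every `i ≥ 1`, one has `i·|𝒢^{(i+1)}| ≤ |𝒢^{(i)}|`. -/
theorem bridge_addable_component_count_bound :
    ∀ n : ℕ, 1 ≤ n → ∀ 𝒢 : Set (SimpleGraph (Fin n)), 𝒢.Finite → BridgeAddable 𝒢 →
      ∀ i : ℕ, 1 ≤ i →
        i * ({G ∈ 𝒢 | numComponents G = i + 1}).ncard ≤
          ({G ∈ 𝒢 | numComponents G = i}).ncard := by
  classical
  intro n hn 𝒢 hfin hBA i hi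
  set 𝒜 := hfin.toFinset.filter (fun G => numComponents G = i + 1) with h𝒜
  set ℬ := hfin.toFinset.filter (fun G => numComponents G = i) with hℬ
  have hAset : {G ∈ 𝒢 | numComponents G = i + 1} = ↑𝒜 := by
    ext G; simp [h𝒜, Set.Finite.mem_toFinset]
  have hBset : {G ∈ 𝒢 | numComponents G = i} = ↑ℬ := by
    ext G; simp [hℬ, Set.Finite.mem_toFinset]
  rw [hAset, hBset, Set.ncard_coe_finset, Set.ncard_coe_finset]
  rcases Finset.eq_empty_or_nonempty 𝒜 with hA | ⟨G₀, hG₀⟩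
  · simp [hA]
  have hG₀cc : numComponents G₀ = i + 1 := (Finset.mem_filter.mp hG₀).2
  have hin : i + 1 ≤ n := by have := nc_le G₀; omega
  set P := (𝒜 ×ˢ (Finset.univ : Finset (Fin n × Fin n))).filter
    (fun q => ¬ q.1.Reachable q.2.1 q.2.2) with hP
  have hPlow : 𝒜.card * (2 * i * (n - i)) ≤ P.card := by
    have hcd : P.card = ∑ G ∈ 𝒜, (Finset.univ.filter
        (fun p : Fin n × Fin n => ¬ G.Reachable p.1 p.2)).card := by
      rw [hP, Finset.card_filter, Finset.sum_product]
      refine Finset.sum_congr rfl fun G _ => ?_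
      rw [Finset.card_filter]
    rw [hcd]
    have h := Finset.card_nsmul_le_sum 𝒜
      (fun G => (Finset.univ.filter
        (fun p : Fin n × Fin n => ¬ G.Reachable p.1 p.2)).card)
      (2 * i * (n - i))
      (fun G hG => cross_lower hi (Finset.mem_filter.mp hG).2)
    simpa [smul_eq_mul] using h
  set Q := (ℬ ×ˢ (Finset.univ : Finset (Fin n × Fin n))).filter
    (fun q => IsBr q.1 s(q.2.1, q.2.2)) with hQ
  have hPQ : P.card ≤ Q.card := by
    refine Finset.card_le_card_of_injOn (fun q => (addEdge q.1 q.2.1 q.2.2, q.2)) ?_ ?_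
    · rintro ⟨G, u, v⟩ hq
      obtain ⟨hmem, hnr⟩ := Finset.mem_filter.mp hq
      obtain ⟨hGA, -⟩ := Finset.mem_product.mp hmem
      obtain ⟨hG𝒢f, hGcc⟩ := Finset.mem_filter.mp hGA
      have hG𝒢 : G ∈ 𝒢 := hfin.mem_toFinset.mp hG𝒢f
      have hGcc' : numComponents G = i + 1 := hGcc
      have hnr' : ¬ G.Reachable u v := hnr
      have hne : u ≠ v := fun e => hnr' (e ▸ SimpleGraph.Reachable.refl u)
      show (addEdge G u v, (u, v)) ∈ Q
      have hnadj : ¬ G.Adj u v := fun h => hnr' h.reachable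
      have hmemB : addEdge G u v ∈ ℬ := by
        refine Finset.mem_filter.mpr ⟨hfin.mem_toFinset.mpr (hBA G hG𝒢 u v hnr'), ?_⟩
        show numComponents (addEdge G u v) = i
        have := nc_addEdge hnr'
        omega
      refine Finset.mem_filter.mpr ⟨Finset.mem_product.mpr ⟨hmemB, Finset.mem_univ _⟩, ?_⟩
      rw [isBr_iff]
      refine ⟨addEdge_adj_self hne, ?_⟩
      show ¬((addEdge G u v).deleteEdges {s(u, v)}).Reachable u v
      rw [deleteEdges_addEdge hnadj]
      exact hnr'
    · rintro ⟨G, u, v⟩ hq ⟨G', u', v'⟩ hq' heq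
      obtain ⟨-, hnr⟩ := Finset.mem_filter.mp hq
      obtain ⟨-, hnr'⟩ := Finset.mem_filter.mp hq'
      simp only [Prod.mk.injEq] at heq
      obtain ⟨hGe, hu, hv⟩ := heq
      subst hu; subst hv
      have hnadj : ¬ G.Adj u v := fun h => hnr h.reachable
      have hnadj' : ¬ G'.Adj u v := fun h => hnr' h.reachable
      have hGG : G = G' := by
        rw [← deleteEdges_addEdge hnadj, hGe, deleteEdges_addEdge hnadj']
      rw [hGG]
  have hQup : Q.card ≤ ℬ.card * (2 * (n - i)) := by
    have hcd : Q.card = ∑ G' ∈ ℬ, (Finset.univ.filter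
        (fun p : Fin n × Fin n => IsBr G' s(p.1, p.2))).card := by
      rw [hQ, Finset.card_filter, Finset.sum_product]
      refine Finset.sum_congr rfl fun G' _ => ?_
      rw [Finset.card_filter]
    rw [hcd]
    have h := Finset.sum_le_card_nsmul ℬ
      (fun G' => (Finset.univ.filter
        (fun p : Fin n × Fin n => IsBr G' s(p.1, p.2))).card)
      (2 * (n - i))
      (fun G' hG' => by
        have hb := ordered_bridge_bound G'
        have hcc : numComponents G' = i := (Finset.mem_filter.mp hG').2
        rw [hcc] at hb
        exact hb)
    simpa [smul_eq_mul] using h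
  have hchain : 𝒜.card * (2 * i * (n - i)) ≤ ℬ.card * (2 * (n - i)) :=
    hPlow.trans (hPQ.trans hQup)
  have hfinal : (i * 𝒜.card) * (2 * (n - i)) ≤ ℬ.card * (2 * (n - i)) := by
    calc (i * 𝒜.card) * (2 * (n - i)) = 𝒜.card * (2 * i * (n - i)) := by ring
      _ ≤ ℬ.card * (2 * (n - i)) := hchain
  exact Nat.le_of_mul_le_mul_right hfinal (by omega)
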